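/- Let β ∈ [0, 1/2) and t ∈ [0,T). Then (∫_t^T [(s-t)^{-1/2}(T-s)^{-1/2}]^{1+β} ds)^{1/(1+β)} ≤ 4 (T-t)^{-β/(1+β)}. -/

import Mathlib

open MeasureTheory

/-- Convexity bound: `4^(-β) ≤ 1 - β` for `β ∈ [0, 1/2]`. -/
lemma aux_rpow_four_neg_le (β : ℝ) (h0 : 0 ≤ β) (h1 : β ≤ 1 / 2) :
    (4 : ℝ) ^ (-β) ≤ 1 - β := by
  have hc := convexOn_exp.2 (Set.mem_univ (0 : ℝ)) (Set.mem_univ (-Real.log 2))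
    (by linarith : (0:ℝ) ≤ 1 - 2 * β) (by linarith : (0:ℝ) ≤ 2 * β) (by ring)
  have hexp : Real.exp (-Real.log 2) = 1 / 2 := by
    rw [Real.exp_neg, Real.exp_log (by norm_num : (0:ℝ) < 2)]
    norm_num
  simp only [smul_eq_mul, mul_zero, zero_add, Real.exp_zero, mul_one, hexp] at hc
  have h4 : (4 : ℝ) ^ (-β) = Real.exp (2 * β * -Real.log 2) := by
    rw [Real.rpow_def_of_pos (by norm_num : (0:ℝ) < 4)]
    congr 1
    have hl : Real.log 4 = 2 * Real.log 2 := by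
      rw [show (4:ℝ) = 2 ^ (2:ℕ) by norm_num, Real.log_pow]
      push_cast; ring
    rw [hl]; ring
  rw [h4]
  linarith [hc]

/-- Scalar inequality: `4/(1-β) ≤ 4^(1+β)` for `β ∈ [0, 1/2)`. -/
lemma aux_four_div_le (β : ℝ) (h0 : 0 ≤ β) (h1 : β < 1 / 2) :
    4 / (1 - β) ≤ (4 : ℝ) ^ (1 + β) := by
  have hb : (0:ℝ) < 1 - β := by linarith
  have ha : (0:ℝ) < (4:ℝ) ^ β := Real.rpow_pos_of_pos (by norm_num) β
  have hneg : (4 : ℝ) ^ (-β) = ((4:ℝ) ^ β)⁻¹ := Real.rpow_neg (by norm_num) β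
  have hA := aux_rpow_four_neg_le β h0 h1.le
  rw [hneg] at hA
  have h1' : 1 ≤ (1 - β) * (4:ℝ) ^ β := by
    have := mul_le_mul_of_nonneg_right hA ha.le
    rwa [inv_mul_cancel₀ (ne_of_gt ha)] at this
  rw [Real.rpow_add (by norm_num : (0:ℝ) < 4), Real.rpow_one, div_le_iff₀ hb]
  nlinarith [h1', ha]

/-- For `β ∈ [0,1/2)` and `t ∈ [0,T)`:
`(∫_t^T [(s-t)^{-1/2}(T-s)^{-1/2}]^{1+β} ds)^{1/(1+β)} ≤ 4 (T-t)^{-β/(1+β)}`. -/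
theorem sqrt_kernel_power_est (T : ℝ) (hT : 0 < T) (t : ℝ) (ht : t ∈ Set.Ico (0 : ℝ) T)
    (β : ℝ) (hβ : β ∈ Set.Ico (0 : ℝ) (1 / 2)) :
    (∫ s in t..T, ((s - t) ^ (-(1 : ℝ) / 2) * (T - s) ^ (-(1 : ℝ) / 2)) ^ (1 + β))
        ^ (1 / (1 + β))
      ≤ 4 * (T - t) ^ (-β / (1 + β)) := by
  obtain ⟨ht0, htT⟩ := ht
  obtain ⟨hβ0, hβh⟩ := hβ
  set q : ℝ := (1 + β) / 2 with hq
  have hδ : (0:ℝ) < T - t := by linarith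
  have hq0 : (0:ℝ) < q := by rw [hq]; linarith
  have hq1 : q < 1 := by rw [hq]; linarith
  have hqm : (-1:ℝ) < -q := by linarith
  have he : (0:ℝ) < 1 + β := by linarith
  -- rewrite the integrand
  have heq : Set.EqOn (fun s => ((s - t) ^ (-(1 : ℝ) / 2) * (T - s) ^ (-(1 : ℝ) / 2)) ^ (1 + β))
      (fun s => (s - t) ^ (-q) * (T - s) ^ (-q)) (Set.uIcc t T) := by
    intro s hs
    rw [Set.uIcc_of_le htT.le] at hs
    obtain ⟨hs1, hs2⟩ := hs
    have h1 : (0:ℝ) ≤ s - t := by linarith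
    have h2 : (0:ℝ) ≤ T - s := by linarith
    show ((s - t) ^ (-(1 : ℝ) / 2) * (T - s) ^ (-(1 : ℝ) / 2)) ^ (1 + β)
      = (s - t) ^ (-q) * (T - s) ^ (-q)
    rw [Real.mul_rpow (Real.rpow_nonneg h1 _) (Real.rpow_nonneg h2 _)]
    rw [show (-q : ℝ) = -(1:ℝ)/2 * (1 + β) by rw [hq]; ring]
    rw [Real.rpow_mul h1, Real.rpow_mul h2]
  -- integrability
  have hrpow : ∀ a b : ℝ, IntervalIntegrable (fun x : ℝ => x ^ (-q)) volume a b :=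
    fun a b => intervalIntegral.intervalIntegrable_rpow' hqm
  have hint1 : IntervalIntegrable (fun s => (s - t) ^ (-q)) volume t T := by
    simpa using (hrpow 0 (T - t)).comp_sub_right t
  have hint2 : IntervalIntegrable (fun s => (T - s) ^ (-q)) volume t T := by
    simpa using (hrpow (T - t) 0).comp_sub_left T
  have hfint : IntervalIntegrable (fun s => (s - t) ^ (-q) * (T - s) ^ (-q)) volume t T := by
    have hp1 : IntervalIntegrable (fun s => (s - t) ^ (-q) * (T - s) ^ (-q)) volume t ((t + T)/2) := by
      have hi : IntervalIntegrable (fun s => (s - t) ^ (-q)) volume t ((t + T)/2) := by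
        simpa using (hrpow 0 ((t + T)/2 - t)).comp_sub_right t
      apply hi.mul_continuousOn
      apply ContinuousOn.rpow_const (by fun_prop)
      intro x hx
      rw [Set.uIcc_of_le (by linarith : t ≤ (t + T)/2)] at hx
      exact Or.inl (ne_of_gt (by nlinarith [hx.2] : (0:ℝ) < T - x))
    have hp2 : IntervalIntegrable (fun s => (s - t) ^ (-q) * (T - s) ^ (-q)) volume ((t + T)/2) T := by
      have hi : IntervalIntegrable (fun s => (T - s) ^ (-q)) volume ((t + T)/2) T := by
        simpa using (hrpow (T - (t + T)/2) 0).comp_sub_left T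
      apply hi.continuousOn_mul
      apply ContinuousOn.rpow_const (by fun_prop)
      intro x hx
      rw [Set.uIcc_of_le (by linarith : (t + T)/2 ≤ T)] at hx
      exact Or.inl (ne_of_gt (by nlinarith [hx.1] : (0:ℝ) < x - t))
    exact hp1.trans hp2
  have hgint : IntervalIntegrable
      (fun s => (T - t) ^ (-q) * ((s - t) ^ (-q) + (T - s) ^ (-q))) volume t T :=
    (hint1.add hint2).const_mul _
  -- pointwise bound
  have hpt : ∀ s ∈ Set.Icc t T,
      (s - t) ^ (-q) * (T - s) ^ (-q)
        ≤ (T - t) ^ (-q) * ((s - t) ^ (-q) + (T - s) ^ (-q)) := by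
    intro s hs
    obtain ⟨hs1, hs2⟩ := hs
    rcases eq_or_lt_of_le hs1 with h | hx
    · rw [← h, sub_self, Real.zero_rpow (by linarith : -q ≠ 0), zero_mul]
      positivity
    rcases eq_or_lt_of_le hs2 with h | hy
    · rw [h, sub_self, Real.zero_rpow (by linarith : -q ≠ 0), mul_zero]
      positivity
    have hx' : (0:ℝ) < s - t := by linarith
    have hy' : (0:ℝ) < T - s := by linarith
    have key : (T - t) ^ q ≤ (s - t) ^ q + (T - s) ^ q := by
      have e1 : (s - t) / (T - t) ≤ ((s - t) / (T - t)) ^ q := by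
        have := Real.rpow_le_rpow_of_exponent_ge (by positivity : (0:ℝ) < (s - t)/(T - t))
          (by rw [div_le_one hδ]; linarith) hq1.le
        simpa using this
      have e2 : (T - s) / (T - t) ≤ ((T - s) / (T - t)) ^ q := by
        have := Real.rpow_le_rpow_of_exponent_ge (by positivity : (0:ℝ) < (T - s)/(T - t))
          (by rw [div_le_one hδ]; linarith) hq1.le
        simpa using this
      rw [Real.div_rpow hx'.le hδ.le] at e1
      rw [Real.div_rpow hy'.le hδ.le] at e2
      have hsum : 1 ≤ (s - t) ^ q / (T - t) ^ q + (T - s) ^ q / (T - t) ^ q := by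
        have : (s - t) / (T - t) + (T - s) / (T - t) = 1 := by field_simp; ring
        linarith
      have hD : (0:ℝ) < (T - t) ^ q := Real.rpow_pos_of_pos hδ q
      rw [← add_div, le_div_iff₀ hD, one_mul] at hsum
      linarith
    have hX : (0:ℝ) < (s - t) ^ q := Real.rpow_pos_of_pos hx' q
    have hY : (0:ℝ) < (T - s) ^ q := Real.rpow_pos_of_pos hy' q
    have hD : (0:ℝ) < (T - t) ^ q := Real.rpow_pos_of_pos hδ q
    rw [Real.rpow_neg hx'.le, Real.rpow_neg hy'.le, Real.rpow_neg hδ.le, ← sub_nonneg]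
    have hiden : ((T - t) ^ q)⁻¹ * (((s - t) ^ q)⁻¹ + ((T - s) ^ q)⁻¹)
        - ((s - t) ^ q)⁻¹ * ((T - s) ^ q)⁻¹
        = ((s - t) ^ q + (T - s) ^ q - (T - t) ^ q)
          / ((T - t) ^ q * ((s - t) ^ q * (T - s) ^ q)) := by
      field_simp
      ring
    rw [hiden]
    exact div_nonneg (by linarith) (by positivity)
  -- values of the comparison integrals
  have hA : (∫ s in t..T, (s - t) ^ (-q)) = (T - t) ^ (1 - q) / (1 - q) := by
    rw [intervalIntegral.integral_comp_sub_right (fun x => x ^ (-q)) t, sub_self,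
      integral_rpow (Or.inl hqm),
      Real.zero_rpow (by linarith : -q + 1 ≠ 0)]
    rw [show -q + 1 = 1 - q by ring]
    ring
  have hB : (∫ s in t..T, (T - s) ^ (-q)) = (T - t) ^ (1 - q) / (1 - q) := by
    rw [intervalIntegral.integral_comp_sub_left (fun x => x ^ (-q)) T, sub_self,
      integral_rpow (Or.inl hqm),
      Real.zero_rpow (by linarith : -q + 1 ≠ 0)]
    rw [show -q + 1 = 1 - q by ring]
    ring
  -- main integral bound
  have hmain : (∫ s in t..T, ((s - t) ^ (-(1 : ℝ) / 2) * (T - s) ^ (-(1 : ℝ) / 2)) ^ (1 + β))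
      ≤ 4 / (1 - β) * (T - t) ^ (-β) := by
    rw [intervalIntegral.integral_congr heq]
    have step := intervalIntegral.integral_mono_on htT.le hfint hgint hpt
    have hval : (∫ s in t..T, (T - t) ^ (-q) * ((s - t) ^ (-q) + (T - s) ^ (-q)))
        = 4 / (1 - β) * (T - t) ^ (-β) := by
      rw [intervalIntegral.integral_const_mul, intervalIntegral.integral_add hint1 hint2,
        hA, hB]
      have h2 : (T - t) ^ (-q) * (T - t) ^ (1 - q) = (T - t) ^ (-β) := by
        rw [← Real.rpow_add hδ]
        congr 1
        rw [hq]; ring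
      have h1q : 1 - q = (1 - β) / 2 := by rw [hq]; ring
      have hb1 : (0:ℝ) < 1 - β := by linarith
      rw [h1q] at h2 ⊢
      field_simp
      nlinarith [h2]
    rw [hval] at step
    exact step
  -- conclude
  have h0 : 0 ≤ ∫ s in t..T, ((s - t) ^ (-(1 : ℝ) / 2) * (T - s) ^ (-(1 : ℝ) / 2)) ^ (1 + β) :=
    intervalIntegral.integral_nonneg htT.le (fun u hu =>
      Real.rpow_nonneg (mul_nonneg (Real.rpow_nonneg (by linarith [hu.1]) _)
        (Real.rpow_nonneg (by linarith [hu.2]) _)) _)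
  calc (∫ s in t..T, ((s - t) ^ (-(1 : ℝ) / 2) * (T - s) ^ (-(1 : ℝ) / 2)) ^ (1 + β))
        ^ (1 / (1 + β))
      ≤ (4 / (1 - β) * (T - t) ^ (-β)) ^ (1 / (1 + β)) :=
        Real.rpow_le_rpow h0 hmain (one_div_nonneg.mpr he.le)
    _ = (4 / (1 - β)) ^ (1 / (1 + β)) * ((T - t) ^ (-β)) ^ (1 / (1 + β)) := by
        rw [Real.mul_rpow (div_nonneg (by norm_num) (by linarith)) (Real.rpow_nonneg hδ.le _)]
    _ ≤ 4 * (T - t) ^ (-β / (1 + β)) := by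
        have h3 : ((T - t) ^ (-β)) ^ (1 / (1 + β)) = (T - t) ^ (-β / (1 + β)) := by
          rw [← Real.rpow_mul hδ.le, mul_one_div]
        have h4 : (4 / (1 - β)) ^ (1 / (1 + β)) ≤ 4 := by
          calc (4 / (1 - β)) ^ (1 / (1 + β))
              ≤ ((4:ℝ) ^ (1 + β)) ^ (1 / (1 + β)) :=
                Real.rpow_le_rpow (div_nonneg (by norm_num) (by linarith))
                  (aux_four_div_le β hβ0 hβh) (one_div_nonneg.mpr he.le)
            _ = 4 := by
                rw [← Real.rpow_mul (by norm_num), mul_one_div_cancel (ne_of_gt he),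
                  Real.rpow_one]
        rw [h3]
        exact mul_le_mul_of_nonneg_right h4 (Real.rpow_nonneg hδ.le _)
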